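/- arXiv:math-ph/0505010 — 5 statements merged into one kernel-verified Lean document; each statement's English description precedes it below -/
import Mathlib

section
/- Let D ⊆ ℝ² be open and E : D → ℝ smooth. Suppose there exists a nonzero vector (γ₁, γ₂, γ₃) ∈ ℝ³ such that γ₁·∂²E/∂x¹∂x¹ + γ₂·∂²E/∂x¹∂x² + γ₃·∂²E/∂x²∂x² = 0 at every point of D. Then at every point of D where det Hess E ≠ 0, the scalar curvature R of the Hessian metric of E vanishes. -/
/-- Partial derivative `∂f/∂x¹` (first coordinate) of a function on `ℝ²`. -/
noncomputable def pS (f : ℝ × ℝ → ℝ) (x : ℝ × ℝ) : ℝ := fderiv ℝ f x (1, 0)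

/-- Partial derivative `∂f/∂x²` (second coordinate) of a function on `ℝ²`. -/
noncomputable def pV (f : ℝ × ℝ → ℝ) (x : ℝ × ℝ) : ℝ := fderiv ℝ f x (0, 1)

/-- Hessian metric entry `η₁₁ = ∂²E/∂x¹∂x¹`. -/
noncomputable def e11 (E : ℝ × ℝ → ℝ) : ℝ × ℝ → ℝ := pS (pS E)

/-- Hessian metric entry `η₁₂ = ∂²E/∂x¹∂x²`. -/
noncomputable def e12 (E : ℝ × ℝ → ℝ) : ℝ × ℝ → ℝ := pV (pS E)

/-- Hessian metric entry `η₂₂ = ∂²E/∂x²∂x²`. -/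
noncomputable def e22 (E : ℝ × ℝ → ℝ) : ℝ × ℝ → ℝ := pV (pV E)

/-- Determinant `det η = η₁₁η₂₂ − η₁₂²` of the Hessian metric of `E`. -/
noncomputable def detHess (E : ℝ × ℝ → ℝ) (x : ℝ × ℝ) : ℝ :=
  e11 E x * e22 E x - (e12 E x) ^ 2

/-- Determinant of the 3×3 matrix `M` with rows `(η₁₁, ∂₁η₁₁, ∂₂η₁₁)`,
`(η₁₂, ∂₁η₁₂, ∂₂η₁₂)`, `(η₂₂, ∂₁η₂₂, ∂₂η₂₂)`. -/
noncomputable def detM (E : ℝ × ℝ → ℝ) (x : ℝ × ℝ) : ℝ :=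
  Matrix.det !![e11 E x, pS (e11 E) x, pV (e11 E) x;
                e12 E x, pS (e12 E) x, pV (e12 E) x;
                e22 E x, pS (e22 E) x, pV (e22 E) x]

/-- Scalar curvature `R = −(1/(4(det η)²))·det M` of the Hessian metric of `E`. -/
noncomputable def scalarCurv (E : ℝ × ℝ → ℝ) (x : ℝ × ℝ) : ℝ :=
  -(1 / (4 * (detHess E x) ^ 2)) * detM E x

lemma contDiffOn_pd (v : ℝ × ℝ) {f : ℝ × ℝ → ℝ} {D : Set (ℝ × ℝ)} (hD : IsOpen D)
    (hf : ContDiffOn ℝ (⊤ : ℕ∞) f D) :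
    ContDiffOn ℝ (⊤ : ℕ∞) (fun x => fderiv ℝ f x v) D := by
  have h1 : ContDiffOn ℝ (⊤ : ℕ∞) (fun x => fderiv ℝ f x) D :=
    hf.fderiv_of_isOpen hD (by norm_cast)
  exact (ContinuousLinearMap.apply ℝ ℝ v).contDiff.comp_contDiffOn h1

lemma pd_comb (v : ℝ × ℝ) {f g h : ℝ × ℝ → ℝ} {x : ℝ × ℝ} (γ₁ γ₂ γ₃ : ℝ)
    (hf : DifferentiableAt ℝ f x) (hg : DifferentiableAt ℝ g x)
    (hh : DifferentiableAt ℝ h x) :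
    fderiv ℝ (fun y => γ₁ * f y + γ₂ * g y + γ₃ * h y) x v
      = γ₁ * fderiv ℝ f x v + γ₂ * fderiv ℝ g x v + γ₃ * fderiv ℝ h x v := by
  rw [fderiv_fun_add ((hf.const_mul γ₁).fun_add (hg.const_mul γ₂)) (hh.const_mul γ₃),
    fderiv_fun_add (hf.const_mul γ₁) (hg.const_mul γ₂),
    fderiv_const_mul hf γ₁, fderiv_const_mul hg γ₂, fderiv_const_mul hh γ₃]
  simp

/-- If a nonzero constant vector `(γ₁,γ₂,γ₃)` satisfies
`γ₁·∂²E/∂x¹∂x¹ + γ₂·∂²E/∂x¹∂x² + γ₃·∂²E/∂x²∂x² = 0` on an open set `D`, then the scalar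
curvature of the Hessian metric of `E` vanishes at every point of `D` where `det Hess E ≠ 0`. -/
theorem scalar_curvature_zero_of_linear_relation (D : Set (ℝ × ℝ)) (hD : IsOpen D)
    (E : ℝ × ℝ → ℝ) (hE : ContDiffOn ℝ (⊤ : ℕ∞) E D)
    (γ₁ γ₂ γ₃ : ℝ) (hγ : ((γ₁, γ₂, γ₃) : ℝ × ℝ × ℝ) ≠ (0, 0, 0))
    (hrel : ∀ x ∈ D, γ₁ * e11 E x + γ₂ * e12 E x + γ₃ * e22 E x = 0) :
    ∀ x ∈ D, detHess E x ≠ 0 → scalarCurv E x = 0 := by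
  -- smoothness of second partials
  have h11 : ContDiffOn ℝ (⊤ : ℕ∞) (e11 E) D :=
    contDiffOn_pd (1,0) hD (contDiffOn_pd (1,0) hD hE)
  have h12 : ContDiffOn ℝ (⊤ : ℕ∞) (e12 E) D :=
    contDiffOn_pd (0,1) hD (contDiffOn_pd (1,0) hD hE)
  have h22 : ContDiffOn ℝ (⊤ : ℕ∞) (e22 E) D :=
    contDiffOn_pd (0,1) hD (contDiffOn_pd (0,1) hD hE)
  intro x hx _
  have d11 : DifferentiableAt ℝ (e11 E) x :=
    (h11.contDiffAt (hD.mem_nhds hx)).differentiableAt (by norm_cast)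
  have d12 : DifferentiableAt ℝ (e12 E) x :=
    (h12.contDiffAt (hD.mem_nhds hx)).differentiableAt (by norm_cast)
  have d22 : DifferentiableAt ℝ (e22 E) x :=
    (h22.contDiffAt (hD.mem_nhds hx)).differentiableAt (by norm_cast)
  -- the combination vanishes near x, so its fderiv at x is 0
  have hF : (fun y => γ₁ * e11 E y + γ₂ * e12 E y + γ₃ * e22 E y)
      =ᶠ[nhds x] (fun _ => (0:ℝ)) :=
    Filter.eventually_of_mem (hD.mem_nhds hx) hrel
  have hF' : fderiv ℝ (fun y => γ₁ * e11 E y + γ₂ * e12 E y + γ₃ * e22 E y) x = 0 := by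
    rw [hF.fderiv_eq]; exact fderiv_const_apply 0
  have key : ∀ v : ℝ × ℝ,
      γ₁ * fderiv ℝ (e11 E) x v + γ₂ * fderiv ℝ (e12 E) x v
        + γ₃ * fderiv ℝ (e22 E) x v = 0 := by
    intro v
    rw [← pd_comb v γ₁ γ₂ γ₃ d11 d12 d22, hF']
    simp
  -- the row vector (γ₁,γ₂,γ₃) kills the matrix M
  have hdetM : detM E x = 0 := by
    have hv : (![γ₁, γ₂, γ₃] : Fin 3 → ℝ) ≠ 0 := by
      intro h
      apply hγ
      have h1 := congrFun h 0
      have h2 := congrFun h 1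
      have h3 := congrFun h 2
      simp at h1 h2 h3
      simp [h1, h2, h3]
    have hvM : Matrix.vecMul (![γ₁, γ₂, γ₃] : Fin 3 → ℝ)
        !![e11 E x, pS (e11 E) x, pV (e11 E) x;
           e12 E x, pS (e12 E) x, pV (e12 E) x;
           e22 E x, pS (e22 E) x, pV (e22 E) x] = 0 := by
      funext i
      fin_cases i <;>
        · show dotProduct _ _ = _
          simp [dotProduct, Fin.sum_univ_three, pS, pV]
          linarith [hrel x hx, key (1,0), key (0,1)]
    exact Matrix.exists_vecMul_eq_zero_iff.mp ⟨_, hv, hvM⟩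
  unfold scalarCurv
  rw [hdetM, mul_zero]
end

section
/- Identity I: Under the elementary-system hypotheses, at every point of D one has (∂C_v/∂V) + (α/k)·(∂C_v/∂S) = (C_v/k)·(∂α/∂S) − (C_v·α/k²)·(∂k/∂S). -/
lemma fd_inv (g : ℝ × ℝ → ℝ) (x v : ℝ × ℝ)
    (hg : DifferentiableAt ℝ g x) (h0 : g x ≠ 0) :
    fderiv ℝ (fun y => (g y)⁻¹) x v = -(fderiv ℝ g x v) / g x ^ 2 := by
  have h := (hasDerivAt_inv h0).comp_hasFDerivAt x hg.hasFDerivAt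
  rw [show (fun y => (g y)⁻¹) = ((fun y => y⁻¹) ∘ g) from rfl, h.fderiv]
  simp [smul_eq_mul]
  ring

lemma fd_mul' (f g : ℝ × ℝ → ℝ) (x v : ℝ × ℝ) (hf : DifferentiableAt ℝ f x)
    (hg : DifferentiableAt ℝ g x) :
    fderiv ℝ (fun y => f y * g y) x v
      = fderiv ℝ f x v * g x + f x * fderiv ℝ g x v := by
  rw [fderiv_fun_mul hf hg]
  simp [smul_eq_mul]
  ring

lemma fd_div (f g : ℝ × ℝ → ℝ) (x v : ℝ × ℝ) (hf : DifferentiableAt ℝ f x)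
    (hg : DifferentiableAt ℝ g x) (h0 : g x ≠ 0) :
    fderiv ℝ (fun y => f y / g y) x v
      = (fderiv ℝ f x v * g x - f x * fderiv ℝ g x v) / g x ^ 2 := by
  simp only [div_eq_mul_inv]
  rw [fd_mul' f (fun y => (g y)⁻¹) x v hf (hg.inv h0), fd_inv g x v hg h0]
  field_simp
  ring

lemma fd_neg (f : ℝ × ℝ → ℝ) (x v : ℝ × ℝ) :
    fderiv ℝ (fun y => -f y) x v = -fderiv ℝ f x v := by
  rw [fderiv_fun_neg]; simp

lemma two_le_top_coe : (2 : WithTop ℕ∞) ≤ ((⊤:ℕ∞) : WithTop ℕ∞) :=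
  WithTop.coe_le_coe.mpr le_top |>.trans_eq' (by norm_cast)

lemma key_apply (f : ℝ × ℝ → ℝ) (x : ℝ × ℝ)
    (hdf : DifferentiableAt ℝ (fderiv ℝ f) x) (v w : ℝ × ℝ) :
    fderiv ℝ (fun y => fderiv ℝ f y w) x v = fderiv ℝ (fderiv ℝ f) x v w := by
  rw [fderiv_clm_apply hdf (differentiableAt_const w)]
  simp

lemma mixed_symm {D : Set (ℝ × ℝ)} (hD : IsOpen D) {f : ℝ × ℝ → ℝ}
    (hf : ContDiffOn ℝ (⊤ : ℕ∞) f D) {x : ℝ × ℝ} (hx : x ∈ D) :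
    pV (pS f) x = pS (pV f) x := by
  have hfa : ContDiffAt ℝ (⊤ : ℕ∞) f x := hf.contDiffAt (hD.mem_nhds hx)
  have hsym : IsSymmSndFDerivAt ℝ f x := hfa.isSymmSndFDerivAt (by rw [minSmoothness_of_isRCLikeNormedField]; exact two_le_top_coe)
  have hdf : DifferentiableAt ℝ (fderiv ℝ f) x :=
    (hfa.fderiv_right (m := 1)
      (by rw [show ((1:WithTop ℕ∞) + 1) = 2 from rfl]; exact two_le_top_coe)).differentiableAt one_ne_zero
  show fderiv ℝ (fun y => fderiv ℝ f y (1, 0)) x (0, 1)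
      = fderiv ℝ (fun y => fderiv ℝ f y (0, 1)) x (1, 0)
  rw [key_apply f x hdf, key_apply f x hdf, hsym]

lemma one_le_top_coe : (1 : WithTop ℕ∞) ≤ ((⊤:ℕ∞) : WithTop ℕ∞) :=
  one_le_two.trans two_le_top_coe

lemma top_add_one_le : ((⊤:ℕ∞) : WithTop ℕ∞) + 1 ≤ ((⊤:ℕ∞) : WithTop ℕ∞) := by
  norm_cast

theorem identity_I'
    (D : Set (ℝ × ℝ)) (hD : IsOpen D)
    (U Cv α k : ℝ × ℝ → ℝ)
    (hU : ContDiffOn ℝ (⊤ : ℕ∞) U D)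
    (hCv : ContDiffOn ℝ (⊤ : ℕ∞) Cv D)
    (hα : ContDiffOn ℝ (⊤ : ℕ∞) α D)
    (hk : ContDiffOn ℝ (⊤ : ℕ∞) k D)
    (hT0 : ∀ x ∈ D, pS U x ≠ 0)
    (hCv0 : ∀ x ∈ D, Cv x ≠ 0)
    (hk0 : ∀ x ∈ D, k x ≠ 0)
    (h11 : ∀ x ∈ D, pS (pS U) x = pS U x / Cv x)
    (h12 : ∀ x ∈ D, pV (pS U) x = -(pS U x * α x) / (k x * Cv x)) :
    ∀ x ∈ D,
      pV Cv x + (α x / k x) * pS Cv x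
        = (Cv x / k x) * pS α x - (Cv x * α x / (k x) ^ 2) * pS k x := by
  intro x hx
  have hmem : D ∈ nhds x := hD.mem_nhds hx
  have hTsm : ContDiffOn ℝ (⊤ : ℕ∞) (pS U) D :=
    (hU.fderiv_of_isOpen hD top_add_one_le).clm_apply contDiffOn_const
  have dCv : DifferentiableAt ℝ Cv x :=
    (hCv.contDiffAt hmem).differentiableAt (by simp)
  have dα : DifferentiableAt ℝ α x :=
    (hα.contDiffAt hmem).differentiableAt (by simp)
  have dk : DifferentiableAt ℝ k x :=
    (hk.contDiffAt hmem).differentiableAt (by simp)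
  have dT : DifferentiableAt ℝ (pS U) x :=
    (hTsm.contDiffAt hmem).differentiableAt (by simp)
  -- Clairaut for pS U
  have hclair : pV (pS (pS U)) x = pS (pV (pS U)) x := mixed_symm hD hTsm hx
  -- left side: pV of T/Cv
  have hl1 : pV (pS (pS U)) x = pV (fun y => pS U y / Cv y) x := by
    have hE : pS (pS U) =ᶠ[nhds x] fun y => pS U y / Cv y :=
      Filter.eventuallyEq_of_mem hmem h11
    show fderiv ℝ (pS (pS U)) x (0,1) = fderiv ℝ (fun y => pS U y / Cv y) x (0,1)
    rw [hE.fderiv_eq]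
  have hl2 : pV (fun y => pS U y / Cv y) x
      = (pV (pS U) x * Cv x - pS U x * pV Cv x) / Cv x ^ 2 :=
    fd_div _ _ x (0,1) dT dCv (hCv0 x hx)
  -- right side: pS of -(T α)/(k Cv)
  have hr1 : pS (pV (pS U)) x = pS (fun y => -(pS U y * α y) / (k y * Cv y)) x := by
    have hE : pV (pS U) =ᶠ[nhds x] fun y => -(pS U y * α y) / (k y * Cv y) :=
      Filter.eventuallyEq_of_mem hmem h12
    show fderiv ℝ (pV (pS U)) x (1,0) = fderiv ℝ (fun y => -(pS U y * α y) / (k y * Cv y)) x (1,0)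
    rw [hE.fderiv_eq]
  have hr2 : pS (fun y => -(pS U y * α y) / (k y * Cv y)) x
      = (fderiv ℝ (fun y => -(pS U y * α y)) x (1,0) * (k x * Cv x)
          - -(pS U x * α x) * fderiv ℝ (fun y => k y * Cv y) x (1,0))
        / (k x * Cv x) ^ 2 :=
    fd_div _ _ x (1,0) ((dT.mul dα).neg) (dk.mul dCv)
      (mul_ne_zero (hk0 x hx) (hCv0 x hx))
  have hr3 : fderiv ℝ (fun y => -(pS U y * α y)) x (1,0)
      = -(pS (pS U) x * α x + pS U x * pS α x) := by
    rw [fd_neg _ x (1,0), fd_mul' _ _ x (1,0) dT dα]; rfl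
  have hr4 : fderiv ℝ (fun y => k y * Cv y) x (1,0)
      = pS k x * Cv x + k x * pS Cv x :=
    fd_mul' _ _ x (1,0) dk dCv
  have hE : (pV (pS U) x * Cv x - pS U x * pV Cv x) / Cv x ^ 2
      = (-(pS (pS U) x * α x + pS U x * pS α x) * (k x * Cv x)
          - -(pS U x * α x) * (pS k x * Cv x + k x * pS Cv x)) / (k x * Cv x) ^ 2 := by
    rw [← hr3, ← hr4, ← hr2, ← hl2, ← hl1, ← hr1, hclair]
  rw [h11 x hx, h12 x hx] at hE
  have hc := hCv0 x hx
  have hkk := hk0 x hx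
  have hT := hT0 x hx
  field_simp at hE
  have hM : (Cv x ^ 4 * (k x * pS U x)) ≠ 0 :=
    mul_ne_zero (pow_ne_zero _ hc) (mul_ne_zero hkk hT)
  have hstar : -(k x ^ 2) * pV Cv x
      = -(k x * Cv x * pS α x) + α x * Cv x * pS k x + k x * α x * pS Cv x := by
    apply mul_left_cancel₀ hM
    linear_combination (Cv x ^ 4 * (k x * pS U x)) * hE
  field_simp
  linear_combination (-1) * hstar

/-- Identity I: for an elementary thermodynamical system with internal energy `U(S,V)`,
temperature `T = ∂U/∂S`, heat capacity `C_v`, expansion coefficient `α` and isothermal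
compressibility `k` (so that `Hess U = (1/C_v)·[[T, −Tα/k], [−Tα/k, C_p/(Vk)]]` with
`C_p = C_v + V·T·α²/k`), one has
`∂C_v/∂V + (α/k)·∂C_v/∂S = (C_v/k)·∂α/∂S − (C_v·α/k²)·∂k/∂S` on `D`. -/
theorem identity_I
    (D : Set (ℝ × ℝ)) (hD : IsOpen D) (hDV : ∀ x ∈ D, 0 < x.2)
    (U Cv α k : ℝ × ℝ → ℝ)
    (hU : ContDiffOn ℝ (⊤ : ℕ∞) U D)
    (hCv : ContDiffOn ℝ (⊤ : ℕ∞) Cv D)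
    (hα : ContDiffOn ℝ (⊤ : ℕ∞) α D)
    (hk : ContDiffOn ℝ (⊤ : ℕ∞) k D)
    (hT0 : ∀ x ∈ D, pS U x ≠ 0)
    (hCv0 : ∀ x ∈ D, Cv x ≠ 0)
    (hk0 : ∀ x ∈ D, k x ≠ 0)
    (h11 : ∀ x ∈ D, e11 U x = pS U x / Cv x)
    (h12 : ∀ x ∈ D, e12 U x = -(pS U x * α x) / (k x * Cv x))
    (h22 : ∀ x ∈ D,
      e22 U x = (Cv x + x.2 * pS U x * α x ^ 2 / k x) / (x.2 * k x * Cv x))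
    :
    ∀ x ∈ D,
      pV Cv x + (α x / k x) * pS Cv x
        = (Cv x / k x) * pS α x - (Cv x * α x / (k x) ^ 2) * pS k x := by
  exact identity_I' D hD U Cv α k hU hCv hα hk hT0 hCv0 hk0 h11 h12
end

section
/- Identity II: Under the elementary-system hypotheses, with α additionally nowhere zero on D, at every point of D one has ∂k/∂V − (k/α)·(∂α/∂V) = (∂α/∂S) − (α/k + C_v/(T·V·α))·(∂k/∂S); equivalently, k·(∂/∂V)(ln(k/α)) = (∂α/∂S) − (α/k + C_v/(T·V·α))·(∂k/∂S). -/
open Filter Topology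

lemma hasDerivAt_lineS {f : ℝ × ℝ → ℝ} {x : ℝ × ℝ} (hf : DifferentiableAt ℝ f x) :
    HasDerivAt (fun s => f (s, x.2)) (pS f x) x.1 := by
  have hγ : HasDerivAt (fun s : ℝ => (s, x.2)) (((1:ℝ), (0:ℝ))) x.1 :=
    (hasDerivAt_id x.1).prodMk (hasDerivAt_const x.1 x.2)
  have h := HasFDerivAt.comp_hasDerivAt (l := f) x.1 (by simpa using hf.hasFDerivAt) hγ
  simpa [pS, Function.comp_def] using h

lemma hasDerivAt_lineV {f : ℝ × ℝ → ℝ} {x : ℝ × ℝ} (hf : DifferentiableAt ℝ f x) :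
    HasDerivAt (fun t => f (x.1, t)) (pV f x) x.2 := by
  have hγ : HasDerivAt (fun t : ℝ => (x.1, t)) (((0:ℝ), (1:ℝ))) x.2 :=
    (hasDerivAt_const x.2 x.1).prodMk (hasDerivAt_id x.2)
  have h := HasFDerivAt.comp_hasDerivAt (l := f) x.2 (by simpa using hf.hasFDerivAt) hγ
  simpa [pV, Function.comp_def] using h

lemma pS_val {f : ℝ × ℝ → ℝ} {x : ℝ × ℝ} {d : ℝ} (hf : DifferentiableAt ℝ f x)
    (h : HasDerivAt (fun s => f (s, x.2)) d x.1) : pS f x = d :=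
  (hasDerivAt_lineS hf).unique h

lemma pV_val {f : ℝ × ℝ → ℝ} {x : ℝ × ℝ} {d : ℝ} (hf : DifferentiableAt ℝ f x)
    (h : HasDerivAt (fun t => f (x.1, t)) d x.2) : pV f x = d :=
  (hasDerivAt_lineV hf).unique h

lemma pd_symm {f : ℝ × ℝ → ℝ} {x : ℝ × ℝ} (hf : ContDiffAt ℝ 3 f x) :
    pV (pS f) x = pS (pV f) x := by
  have hd : DifferentiableAt ℝ (fderiv ℝ f) x :=
    (hf.fderiv_right (m := 2) (by norm_num)).differentiableAt (by norm_num)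
  have hsym := hf.isSymmSndFDerivAt (by norm_num)
  have H1 : HasFDerivAt (fun y => (fderiv ℝ f y) ((1:ℝ),(0:ℝ)))
      ((fderiv ℝ f x).comp (0 : (ℝ×ℝ) →L[ℝ] (ℝ×ℝ)) + (fderiv ℝ (fderiv ℝ f) x).flip ((1:ℝ),(0:ℝ))) x :=
    hd.hasFDerivAt.clm_apply (hasFDerivAt_const _ _)
  have H2 : HasFDerivAt (fun y => (fderiv ℝ f y) ((0:ℝ),(1:ℝ)))
      ((fderiv ℝ f x).comp (0 : (ℝ×ℝ) →L[ℝ] (ℝ×ℝ)) + (fderiv ℝ (fderiv ℝ f) x).flip ((0:ℝ),(1:ℝ))) x :=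
    hd.hasFDerivAt.clm_apply (hasFDerivAt_const _ _)
  have e1 : pV (pS f) x = fderiv ℝ (fderiv ℝ f) x (0,1) (1,0) := by
    show fderiv ℝ (fun y => (fderiv ℝ f y) ((1:ℝ),(0:ℝ))) x (0,1) = _
    rw [H1.fderiv]; simp
  have e2 : pS (pV f) x = fderiv ℝ (fderiv ℝ f) x (1,0) (0,1) := by
    show fderiv ℝ (fun y => (fderiv ℝ f y) ((0:ℝ),(1:ℝ))) x (1,0) = _
    rw [H2.fderiv]; simp
  rw [e1, e2, hsym]

lemma contDiffAt_pS {f : ℝ × ℝ → ℝ} {x : ℝ × ℝ} (hf : ContDiffAt ℝ (⊤:ℕ∞) f x) :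
    ContDiffAt ℝ (⊤:ℕ∞) (pS f) x := by
  have h1 : ContDiffAt ℝ (⊤:ℕ∞) (fderiv ℝ f) x :=
    hf.fderiv_right (le_of_eq (by norm_num))
  exact h1.clm_apply contDiffAt_const

lemma contDiffAt_pV {f : ℝ × ℝ → ℝ} {x : ℝ × ℝ} (hf : ContDiffAt ℝ (⊤:ℕ∞) f x) :
    ContDiffAt ℝ (⊤:ℕ∞) (pV f) x := by
  have h1 : ContDiffAt ℝ (⊤:ℕ∞) (fderiv ℝ f) x :=
    hf.fderiv_right (le_of_eq (by norm_num))
  exact h1.clm_apply contDiffAt_const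

lemma diffDiv {f g : ℝ × ℝ → ℝ} {x : ℝ × ℝ} (hf : DifferentiableAt ℝ f x)
    (hg : DifferentiableAt ℝ g x) (h0 : g x ≠ 0) :
    DifferentiableAt ℝ (fun y => f y / g y) x := by
  simp only [div_eq_mul_inv]
  exact hf.mul (hg.inv h0)

/-- Identity II: for an elementary thermodynamical system (hypotheses as in Identity I), with
`α` nowhere zero, one has
`∂k/∂V − (k/α)·∂α/∂V = ∂α/∂S − (α/k + C_v/(T·V·α))·∂k/∂S` on `D`; equivalently,
`k·∂/∂V(ln(k/α)) = ∂α/∂S − (α/k + C_v/(T·V·α))·∂k/∂S`. -/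
theorem identity_II
    (D : Set (ℝ × ℝ)) (hD : IsOpen D) (hDV : ∀ x ∈ D, 0 < x.2)
    (U Cv α k : ℝ × ℝ → ℝ)
    (hU : ContDiffOn ℝ (⊤ : ℕ∞) U D)
    (hCv : ContDiffOn ℝ (⊤ : ℕ∞) Cv D)
    (hα : ContDiffOn ℝ (⊤ : ℕ∞) α D)
    (hk : ContDiffOn ℝ (⊤ : ℕ∞) k D)
    (hT0 : ∀ x ∈ D, pS U x ≠ 0)
    (hCv0 : ∀ x ∈ D, Cv x ≠ 0)
    (hk0 : ∀ x ∈ D, k x ≠ 0)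
    (h11 : ∀ x ∈ D, e11 U x = pS U x / Cv x)
    (h12 : ∀ x ∈ D, e12 U x = -(pS U x * α x) / (k x * Cv x))
    (h22 : ∀ x ∈ D,
      e22 U x = (Cv x + x.2 * pS U x * α x ^ 2 / k x) / (x.2 * k x * Cv x))
    (hα0 : ∀ x ∈ D, α x ≠ 0) :
    ∀ x ∈ D,
      (pV k x - (k x / α x) * pV α x
        = pS α x - (α x / k x + Cv x / (pS U x * x.2 * α x)) * pS k x) ∧
      (k x * pV (fun y => Real.log (k y / α y)) x
        = pS α x - (α x / k x + Cv x / (pS U x * x.2 * α x)) * pS k x) := by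
  intro x hx
  have hmem : D ∈ 𝓝 x := hD.mem_nhds hx
  have hUx : ContDiffAt ℝ (⊤:ℕ∞) U x := hU.contDiffAt hmem
  have hCvx : ContDiffAt ℝ (⊤:ℕ∞) Cv x := hCv.contDiffAt hmem
  have hαx : ContDiffAt ℝ (⊤:ℕ∞) α x := hα.contDiffAt hmem
  have hkx : ContDiffAt ℝ (⊤:ℕ∞) k x := hk.contDiffAt hmem
  have hTx : ContDiffAt ℝ (⊤:ℕ∞) (pS U) x := contDiffAt_pS hUx
  have hWx : ContDiffAt ℝ (⊤:ℕ∞) (pV U) x := contDiffAt_pV hUx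
  have hone : (1 : WithTop ℕ∞) ≤ ((⊤:ℕ∞) : WithTop ℕ∞) := by exact_mod_cast le_top
  have h3 : ((3:ℕ) : WithTop ℕ∞) ≤ ((⊤:ℕ∞) : WithTop ℕ∞) := by decide
  have hdT : DifferentiableAt ℝ (pS U) x := hTx.differentiableAt (by simp)
  have hdCv : DifferentiableAt ℝ Cv x := hCvx.differentiableAt (by simp)
  have hdα : DifferentiableAt ℝ α x := hαx.differentiableAt (by simp)
  have hdk : DifferentiableAt ℝ k x := hkx.differentiableAt (by simp)
  have ht0 : pS U x ≠ 0 := hT0 x hx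
  have hc0 : Cv x ≠ 0 := hCv0 x hx
  have hk0x : k x ≠ 0 := hk0 x hx
  have ha0 : α x ≠ 0 := hα0 x hx
  have hv0 : x.2 ≠ 0 := (hDV x hx).ne'
  -- line derivatives of the base functions
  have lTS := hasDerivAt_lineS hdT
  have lTV := hasDerivAt_lineV hdT
  have lCvS := hasDerivAt_lineS hdCv
  have lCvV := hasDerivAt_lineV hdCv
  have lαS := hasDerivAt_lineS hdα
  have lαV := hasDerivAt_lineV hdα
  have lkS := hasDerivAt_lineS hdk
  have lkV := hasDerivAt_lineV hdk
  have lVS : HasDerivAt (fun s : ℝ => (s, x.2).2) 0 x.1 := hasDerivAt_const x.1 x.2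
  -- eventual equalities on D
  have ev11 : e11 U =ᶠ[𝓝 x] (fun y => pS U y / Cv y) :=
    eventuallyEq_of_mem hmem (fun y hy => h11 y hy)
  have ev12 : e12 U =ᶠ[𝓝 x] (fun y => -(pS U y * α y) / (k y * Cv y)) :=
    eventuallyEq_of_mem hmem (fun y hy => h12 y hy)
  have ev22 : e22 U =ᶠ[𝓝 x] (fun y => (Cv y + y.2 * pS U y * α y ^ 2 / k y) / (y.2 * k y * Cv y)) :=
    eventuallyEq_of_mem hmem (fun y hy => h22 y hy)
  have evW : e12 U =ᶠ[𝓝 x] pS (pV U) :=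
    eventuallyEq_of_mem hmem (fun y hy =>
      pd_symm ((hU.contDiffAt (hD.mem_nhds hy)).of_le h3))
  -- the two symmetry identities, transported to the explicit formulas
  have hA : pV (fun y => pS U y / Cv y) x = pS (fun y => -(pS U y * α y) / (k y * Cv y)) x := by
    have h1 : pV (e11 U) x = pV (fun y => pS U y / Cv y) x := by
      show fderiv ℝ (e11 U) x (0,1) = fderiv ℝ (fun y => pS U y / Cv y) x (0,1)
      rw [ev11.fderiv_eq]
    have h2 : pS (e12 U) x = pS (fun y => -(pS U y * α y) / (k y * Cv y)) x := by
      show fderiv ℝ (e12 U) x (1,0) = fderiv ℝ (fun y => -(pS U y * α y) / (k y * Cv y)) x (1,0)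
      rw [ev12.fderiv_eq]
    rw [← h1, ← h2]
    exact pd_symm (hTx.of_le h3)
  have hB : pV (fun y => -(pS U y * α y) / (k y * Cv y)) x
      = pS (fun y => (Cv y + y.2 * pS U y * α y ^ 2 / k y) / (y.2 * k y * Cv y)) x := by
    have h1 : pV (e12 U) x = pV (fun y => -(pS U y * α y) / (k y * Cv y)) x := by
      show fderiv ℝ (e12 U) x (0,1) = fderiv ℝ (fun y => -(pS U y * α y) / (k y * Cv y)) x (0,1)
      rw [ev12.fderiv_eq]
    have h2 : pV (e12 U) x = pS (pV (pV U)) x := by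
      calc pV (e12 U) x = pV (pS (pV U)) x := by
            show fderiv ℝ (e12 U) x (0,1) = fderiv ℝ (pS (pV U)) x (0,1)
            rw [evW.fderiv_eq]
        _ = pS (pV (pV U)) x := pd_symm (hWx.of_le h3)
    have h3' : pS (e22 U) x
        = pS (fun y => (Cv y + y.2 * pS U y * α y ^ 2 / k y) / (y.2 * k y * Cv y)) x := by
      show fderiv ℝ (e22 U) x (1,0)
        = fderiv ℝ (fun y => (Cv y + y.2 * pS U y * α y ^ 2 / k y) / (y.2 * k y * Cv y)) x (1,0)
      rw [ev22.fderiv_eq]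
    rw [← h1, ← h3']
    exact h2
  -- compute the derivatives of the formulas
  have vA1 := pV_val (diffDiv hdT hdCv hc0) (lTV.div lCvV hc0)
  have vA2 := pS_val (diffDiv ((hdT.mul hdα).neg) (hdk.mul hdCv) (mul_ne_zero hk0x hc0))
      ((((lTS.mul lαS).neg).div (lkS.mul lCvS) (mul_ne_zero hk0x hc0)))
  have vB1 := pV_val (diffDiv ((hdT.mul hdα).neg) (hdk.mul hdCv) (mul_ne_zero hk0x hc0))
      ((((lTV.mul lαV).neg).div (lkV.mul lCvV) (mul_ne_zero hk0x hc0)))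
  have vB2 := pS_val
      (diffDiv
        (hdCv.add (diffDiv ((((differentiable_snd : Differentiable ℝ (Prod.snd : ℝ×ℝ → ℝ)).differentiableAt).mul hdT).mul (hdα.pow 2)) hdk hk0x))
        ((((differentiable_snd : Differentiable ℝ (Prod.snd : ℝ×ℝ → ℝ)).differentiableAt).mul hdk).mul hdCv)
        (mul_ne_zero (mul_ne_zero hv0 hk0x) hc0))
      ((lCvS.add (((lVS.mul lTS).mul (lαS.pow 2)).div lkS hk0x)).div
        ((lVS.mul lkS).mul lCvS) (mul_ne_zero (mul_ne_zero hv0 hk0x) hc0))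
  have hAe := (vA1.symm.trans hA).trans vA2
  have hBe := (vB1.symm.trans hB).trans vB2
  simp only [Prod.mk.eta, Pi.mul_apply, Pi.neg_apply, Pi.add_apply, Pi.div_apply, Pi.pow_apply, Nat.cast_ofNat] at hAe hBe
  have hT1 : pS (pS U) x = pS U x / Cv x := h11 x hx
  have hT2 : pV (pS U) x = -(pS U x * α x) / (k x * Cv x) := h12 x hx
  rw [hT1, hT2] at hAe hBe
  have p1 : pV k x - (k x / α x) * pV α x
      = pS α x - (α x / k x + Cv x / (pS U x * x.2 * α x)) * pS k x := by
    field_simp at hAe hBe ⊢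
    rw [show (2:ℕ) - 1 = 1 from rfl, pow_one] at hBe
    apply mul_left_cancel₀ (a := x.2 * Cv x) (mul_ne_zero hv0 hc0)
    linear_combination hBe + (pS U x * α x * x.2 ^ 2) * hAe
  refine ⟨p1, ?_⟩
  have hlog := pV_val ((diffDiv hdk hdα ha0).log (div_ne_zero hk0x ha0))
      ((lkV.div lαV ha0).log (div_ne_zero hk0x ha0))
  simp only [Prod.mk.eta, Pi.div_apply] at hlog
  rw [hlog, ← p1]
  field_simp
end

section
/- Let I_V ⊆ ℝ be an open interval, c ≠ 0 a real constant, f₁, f₂ : I_V → ℝ real-analytic with f₁ > 0 on I_V, and U(S,V) = f₁(V)·e^{S/c} − c·f₂(V) on D = ℝ × I_V. Assume det Hess U ≠ 0 at every point of D. Then the scalar curvature of the Hessian metric of U vanishes identically on D if and only if either (i) there exist constants c₁ > 0 and c₂ ∈ ℝ with f₁(V) = c₁·e^{c₂·V} for all V ∈ I_V, or (ii) there exist constants A, B ∈ ℝ with f₂(V) = A·V + B for all V ∈ I_V. -/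
set_option maxHeartbeats 1600000


open ContinuousLinearMap in
lemma hasFDerivAt_aux (c : ℝ) (g₁ g₂ : ℝ → ℝ) (x : ℝ × ℝ) (a₁ a₂ : ℝ)
    (h₁ : HasDerivAt g₁ a₁ x.2) (h₂ : HasDerivAt g₂ a₂ x.2) :
    HasFDerivAt (fun p : ℝ × ℝ => g₁ p.2 * Real.exp (p.1 / c) + g₂ p.2)
      ((g₁ x.2 * (Real.exp (x.1 / c) * (1/c))) • (fst ℝ ℝ ℝ)
        + ((Real.exp (x.1/c) * a₁) • (snd ℝ ℝ ℝ) + a₂ • (snd ℝ ℝ ℝ))) x := by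
  have hA : HasFDerivAt (fun p : ℝ × ℝ => g₁ p.2) (a₁ • ContinuousLinearMap.snd ℝ ℝ ℝ) x :=
    h₁.comp_hasFDerivAt x (hasFDerivAt_snd)
  have hB : HasFDerivAt (fun p : ℝ × ℝ => Real.exp (p.1 / c))
      ((Real.exp (x.1/c) * (1/c)) • ContinuousLinearMap.fst ℝ ℝ ℝ) x := by
    have : HasDerivAt (fun s : ℝ => Real.exp (s / c)) (Real.exp (x.1/c) * (1/c)) x.1 := by
      simpa [Function.comp_def] using (Real.hasDerivAt_exp (x.1/c)).comp x.1 ((hasDerivAt_id x.1).div_const c)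
    exact this.comp_hasFDerivAt x (hasFDerivAt_fst)
  have hC : HasFDerivAt (fun p : ℝ × ℝ => g₂ p.2) (a₂ • ContinuousLinearMap.snd ℝ ℝ ℝ) x :=
    h₂.comp_hasFDerivAt x (hasFDerivAt_snd)
  have := (hA.mul hB).add hC
  refine this.congr_fderiv ?_
  ext y <;> simp

lemma pS_aux (c : ℝ) (g₁ g₂ : ℝ → ℝ) (x : ℝ × ℝ) (a₁ a₂ : ℝ)
    (h₁ : HasDerivAt g₁ a₁ x.2) (h₂ : HasDerivAt g₂ a₂ x.2) :
    pS (fun p : ℝ × ℝ => g₁ p.2 * Real.exp (p.1 / c) + g₂ p.2) x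
      = g₁ x.2 / c * Real.exp (x.1 / c) + 0 := by
  rw [pS, (hasFDerivAt_aux c g₁ g₂ x a₁ a₂ h₁ h₂).fderiv]
  simp; ring

lemma pV_aux (c : ℝ) (g₁ g₂ : ℝ → ℝ) (x : ℝ × ℝ) (a₁ a₂ : ℝ)
    (h₁ : HasDerivAt g₁ a₁ x.2) (h₂ : HasDerivAt g₂ a₂ x.2) :
    pV (fun p : ℝ × ℝ => g₁ p.2 * Real.exp (p.1 / c) + g₂ p.2) x
      = a₁ * Real.exp (x.1 / c) + a₂ := by
  rw [pV, (hasFDerivAt_aux c g₁ g₂ x a₁ a₂ h₁ h₂).fderiv]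
  simp; ring

lemma pS_congr {s : Set ℝ} (hs : IsOpen s) (F₁ F₂ : ℝ × ℝ → ℝ)
    (h : ∀ y : ℝ × ℝ, y.2 ∈ s → F₁ y = F₂ y) (x : ℝ × ℝ) (hx : x.2 ∈ s) :
    pS F₁ x = pS F₂ x := by
  have hmem : {p : ℝ × ℝ | p.2 ∈ s} ∈ nhds x := (hs.preimage continuous_snd).mem_nhds hx
  have : F₁ =ᶠ[nhds x] F₂ := Filter.eventuallyEq_of_mem hmem h
  rw [pS, pS, this.fderiv_eq]

lemma pV_congr {s : Set ℝ} (hs : IsOpen s) (F₁ F₂ : ℝ × ℝ → ℝ)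
    (h : ∀ y : ℝ × ℝ, y.2 ∈ s → F₁ y = F₂ y) (x : ℝ × ℝ) (hx : x.2 ∈ s) :
    pV F₁ x = pV F₂ x := by
  have hmem : {p : ℝ × ℝ | p.2 ∈ s} ∈ nhds x := (hs.preimage continuous_snd).mem_nhds hx
  have : F₁ =ᶠ[nhds x] F₂ := Filter.eventuallyEq_of_mem hmem h
  rw [pV, pV, this.fderiv_eq]

lemma const_of_deriv_zero_on {s : Set ℝ} (hs : IsOpen s) (hconv : Convex ℝ s) (f : ℝ → ℝ)
    (hf : ∀ x ∈ s, DifferentiableAt ℝ f x) (h0 : ∀ x ∈ s, deriv f x = 0)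
    {x y : ℝ} (hx : x ∈ s) (hy : y ∈ s) : f x = f y := by
  apply hconv.is_const_of_fderivWithin_eq_zero (fun z hz => (hf z hz).differentiableWithinAt)
    _ hx hy
  intro z hz
  rw [fderivWithin_of_isOpen hs hz]
  apply ContinuousLinearMap.ext_ring
  rw [ContinuousLinearMap.zero_apply, fderiv_apply_one_eq_deriv]
  exact h0 z hz

/-- For `U(S,V) = f₁(V)·e^{S/c} − c·f₂(V)` on `D = ℝ × I_V` (with `c ≠ 0`, `f₁, f₂`
real-analytic on the open interval `I_V`, `f₁ > 0` on `I_V`, and `det Hess U ≠ 0` on `D`),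
the scalar curvature of the Hessian metric of `U` vanishes identically on `D` if and only if
either `f₁(V) = c₁·e^{c₂V}` for some constants `c₁ > 0`, `c₂ ∈ ℝ`, or `f₂(V) = A·V + B` for
some constants `A, B ∈ ℝ`. -/
theorem zero_curvature_classification_constant_heat_capacity
    (IV : Set ℝ) (hIVopen : IsOpen IV) (hIVint : IV.OrdConnected)
    (c : ℝ) (hc : c ≠ 0) (f₁ f₂ : ℝ → ℝ)
    (hf₁ : AnalyticOnNhd ℝ f₁ IV) (hf₂ : AnalyticOnNhd ℝ f₂ IV)
    (hf₁pos : ∀ V ∈ IV, 0 < f₁ V)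
    (U : ℝ × ℝ → ℝ)
    (hU : ∀ x : ℝ × ℝ, U x = f₁ x.2 * Real.exp (x.1 / c) - c * f₂ x.2)
    (hnd : ∀ x : ℝ × ℝ, x.2 ∈ IV → detHess U x ≠ 0) :
    (∀ x : ℝ × ℝ, x.2 ∈ IV → scalarCurv U x = 0) ↔
      ((∃ c₁ c₂ : ℝ, 0 < c₁ ∧ ∀ V ∈ IV, f₁ V = c₁ * Real.exp (c₂ * V)) ∨
       (∃ A B : ℝ, ∀ V ∈ IV, f₂ V = A * V + B)) := by
  have hconv : Convex ℝ IV := convex_iff_ordConnected.mpr hIVint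
  have hpre : IsPreconnected IV := hconv.isPreconnected
  -- analyticity of derivatives
  have hd1 : AnalyticOnNhd ℝ (deriv f₁) IV := hf₁.deriv
  have hd2 : AnalyticOnNhd ℝ (deriv (deriv f₁)) IV := hd1.deriv
  have hd3 : AnalyticOnNhd ℝ (deriv (deriv (deriv f₁))) IV := hd2.deriv
  have he1 : AnalyticOnNhd ℝ (deriv f₂) IV := hf₂.deriv
  have he2 : AnalyticOnNhd ℝ (deriv (deriv f₂)) IV := he1.deriv
  have he3 : AnalyticOnNhd ℝ (deriv (deriv (deriv f₂))) IV := he2.deriv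
  have HD : ∀ (g : ℝ → ℝ), AnalyticOnNhd ℝ g IV → ∀ v ∈ IV, HasDerivAt g (deriv g v) v :=
    fun g hg v hv => ((hg v hv).differentiableAt).hasDerivAt
  -- U as sum form
  have hUfun : U = fun p : ℝ × ℝ => f₁ p.2 * Real.exp (p.1 / c) + (fun v => -(c * f₂ v)) p.2 := by
    funext p; rw [hU p]; ring
  -- first derivatives of U on the strip
  have hpSU : ∀ y : ℝ × ℝ, y.2 ∈ IV →
      pS U y = (fun v => f₁ v / c) y.2 * Real.exp (y.1 / c) + (fun _ : ℝ => (0:ℝ)) y.2 := by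
    intro y hy
    rw [hUfun]
    exact pS_aux c f₁ _ y (deriv f₁ y.2) (-(c * deriv f₂ y.2)) (HD f₁ hf₁ y.2 hy)
      (((HD f₂ hf₂ y.2 hy).const_mul c).neg)
  have hpVU : ∀ y : ℝ × ℝ, y.2 ∈ IV →
      pV U y = (deriv f₁) y.2 * Real.exp (y.1 / c) + (fun v => -(c * deriv f₂ v)) y.2 := by
    intro y hy
    rw [hUfun]
    exact pV_aux c f₁ _ y (deriv f₁ y.2) (-(c * deriv f₂ y.2)) (HD f₁ hf₁ y.2 hy)
      (((HD f₂ hf₂ y.2 hy).const_mul c).neg)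
  -- second derivatives
  have h11 : ∀ y : ℝ × ℝ, y.2 ∈ IV →
      e11 U y = (fun v => f₁ v / c / c) y.2 * Real.exp (y.1 / c) + (fun _ : ℝ => (0:ℝ)) y.2 := by
    intro y hy
    rw [e11, pS_congr hIVopen (pS U) _ hpSU y hy]
    exact pS_aux c _ _ y (deriv f₁ y.2 / c) 0 ((HD f₁ hf₁ y.2 hy).div_const c) (hasDerivAt_const _ _)
  have h12 : ∀ y : ℝ × ℝ, y.2 ∈ IV →
      e12 U y = (fun v => deriv f₁ v / c) y.2 * Real.exp (y.1 / c) + (fun _ : ℝ => (0:ℝ)) y.2 := by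
    intro y hy
    rw [e12, pV_congr hIVopen (pS U) _ hpSU y hy]
    exact pV_aux c _ _ y (deriv f₁ y.2 / c) 0 ((HD f₁ hf₁ y.2 hy).div_const c) (hasDerivAt_const _ _)
  have h22 : ∀ y : ℝ × ℝ, y.2 ∈ IV →
      e22 U y = (deriv (deriv f₁)) y.2 * Real.exp (y.1 / c)
        + (fun v => -(c * deriv (deriv f₂) v)) y.2 := by
    intro y hy
    rw [e22, pV_congr hIVopen (pV U) _ hpVU y hy]
    exact pV_aux c _ _ y (deriv (deriv f₁) y.2) (-(c * deriv (deriv f₂) y.2))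
      (HD _ hd1 y.2 hy) (((HD _ he1 y.2 hy).const_mul c).neg)
  -- third derivatives
  have hS11 : ∀ y : ℝ × ℝ, y.2 ∈ IV →
      pS (e11 U) y = f₁ y.2 / c / c / c * Real.exp (y.1 / c) + 0 := by
    intro y hy
    rw [pS_congr hIVopen (e11 U) _ h11 y hy]
    exact pS_aux c _ _ y (deriv f₁ y.2 / c / c) 0
      (((HD f₁ hf₁ y.2 hy).div_const c).div_const c) (hasDerivAt_const _ _)
  have hV11 : ∀ y : ℝ × ℝ, y.2 ∈ IV →
      pV (e11 U) y = deriv f₁ y.2 / c / c * Real.exp (y.1 / c) + 0 := by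
    intro y hy
    rw [pV_congr hIVopen (e11 U) _ h11 y hy]
    have := pV_aux c (fun v => f₁ v / c / c) (fun _ : ℝ => (0:ℝ)) y (deriv f₁ y.2 / c / c) 0
      (((HD f₁ hf₁ y.2 hy).div_const c).div_const c) (hasDerivAt_const _ _)
    simpa using this
  have hS12 : ∀ y : ℝ × ℝ, y.2 ∈ IV →
      pS (e12 U) y = deriv f₁ y.2 / c / c * Real.exp (y.1 / c) + 0 := by
    intro y hy
    rw [pS_congr hIVopen (e12 U) _ h12 y hy]
    exact pS_aux c _ _ y (deriv (deriv f₁) y.2 / c) 0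
      ((HD _ hd1 y.2 hy).div_const c) (hasDerivAt_const _ _)
  have hV12 : ∀ y : ℝ × ℝ, y.2 ∈ IV →
      pV (e12 U) y = deriv (deriv f₁) y.2 / c * Real.exp (y.1 / c) + 0 := by
    intro y hy
    rw [pV_congr hIVopen (e12 U) _ h12 y hy]
    have := pV_aux c (fun v => deriv f₁ v / c) (fun _ : ℝ => (0:ℝ)) y (deriv (deriv f₁) y.2 / c) 0
      ((HD _ hd1 y.2 hy).div_const c) (hasDerivAt_const _ _)
    simpa using this
  have hS22 : ∀ y : ℝ × ℝ, y.2 ∈ IV →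
      pS (e22 U) y = deriv (deriv f₁) y.2 / c * Real.exp (y.1 / c) + 0 := by
    intro y hy
    rw [pS_congr hIVopen (e22 U) _ h22 y hy]
    exact pS_aux c _ _ y (deriv (deriv (deriv f₁)) y.2) (-(c * deriv (deriv (deriv f₂)) y.2))
      (HD _ hd2 y.2 hy) (((HD _ he2 y.2 hy).const_mul c).neg)
  have hV22 : ∀ y : ℝ × ℝ, y.2 ∈ IV →
      pV (e22 U) y = deriv (deriv (deriv f₁)) y.2 * Real.exp (y.1 / c)
        + (-(c * deriv (deriv (deriv f₂)) y.2)) := by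
    intro y hy
    rw [pV_congr hIVopen (e22 U) _ h22 y hy]
    exact pV_aux c _ _ y (deriv (deriv (deriv f₁)) y.2) (-(c * deriv (deriv (deriv f₂)) y.2))
      (HD _ hd2 y.2 hy) (((HD _ he2 y.2 hy).const_mul c).neg)
  -- determinant formula
  have hdetM : ∀ x : ℝ × ℝ, x.2 ∈ IV →
      detM U x = -((Real.exp (x.1 / c)) ^ 2 / c ^ 3) * deriv (deriv f₂) x.2
        * (f₁ x.2 * deriv (deriv f₁) x.2 - (deriv f₁ x.2) ^ 2) := by
    intro x hx
    rw [detM, Matrix.det_fin_three]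
    simp only [Matrix.of_apply, Matrix.cons_val', Matrix.cons_val_zero, Matrix.empty_val',
      Matrix.cons_val_fin_one, Matrix.cons_val_one, Matrix.head_cons, Matrix.head_fin_const,
      Matrix.cons_val_two, Matrix.tail_cons]
    rw [h11 x hx, h12 x hx, h22 x hx, hS11 x hx, hV11 x hx, hS12 x hx, hV12 x hx,
      hS22 x hx, hV22 x hx]
    beta_reduce
    field_simp
    ring
  constructor
  · -- forward
    intro hcurv
    have hprod : ∀ v ∈ IV, deriv (deriv f₂) v
        * (f₁ v * deriv (deriv f₁) v - (deriv f₁ v) ^ 2) = 0 := by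
      intro v hv
      have h0 : scalarCurv U (0, v) = 0 := hcurv (0, v) hv
      have hd : detHess U (0, v) ≠ 0 := hnd (0, v) hv
      rw [scalarCurv] at h0
      have hne : -(1 / (4 * (detHess U (0, v)) ^ 2)) ≠ 0 := by
        have h4 : (4 * (detHess U (0, v)) ^ 2) ≠ 0 := by positivity
        exact neg_ne_zero.mpr (one_div_ne_zero h4)
      have hm : detM U (0, v) = 0 := (mul_eq_zero.mp h0).resolve_left hne
      rw [hdetM (0, v) hv] at hm
      simp only [zero_div, Real.exp_zero, one_pow] at hm
      have h3 : (c:ℝ) ^ 3 ≠ 0 := pow_ne_zero _ hc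
      have := mul_eq_zero.mp hm
      rcases this with h' | h'
      · rcases mul_eq_zero.mp h' with h'' | h''
        · exact absurd h'' (by simp [h3])
        · simp [h'']
      · simp [h', mul_comm]
    by_cases hcase : ∀ v ∈ IV, deriv (deriv f₂) v = 0
    · -- f₂ affine
      right
      rcases Set.eq_empty_or_nonempty IV with hIVe | ⟨v₀, hv₀⟩
      · exact ⟨0, 0, fun V hV => absurd hV (by simp [hIVe])⟩
      set A := deriv f₂ v₀ with hA
      have hAconst : ∀ v ∈ IV, deriv f₂ v = A := fun v hv =>
        const_of_deriv_zero_on hIVopen hconv (deriv f₂)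
          (fun z hz => (he1 z hz).differentiableAt) hcase hv hv₀
      set q : ℝ → ℝ := fun v => f₂ v - A * v with hqdef
      have hqd : ∀ v ∈ IV, DifferentiableAt ℝ q v := fun v hv =>
        ((hf₂ v hv).differentiableAt).sub ((differentiableAt_id.const_mul A))
      have hq0 : ∀ v ∈ IV, deriv q v = 0 := by
        intro v hv
        have h1 : HasDerivAt q (deriv f₂ v - A) v := by
          simpa [hqdef, Pi.sub_def] using (HD f₂ hf₂ v hv).sub ((hasDerivAt_id v).const_mul A)
        rw [h1.deriv, hAconst v hv, sub_self]
      refine ⟨A, f₂ v₀ - A * v₀, fun V hV => ?_⟩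
      have hqc : q V = q v₀ := const_of_deriv_zero_on hIVopen hconv q hqd hq0 hV hv₀
      simp only [hqdef] at hqc
      linarith
    · -- f₁ exponential
      left
      push_neg at hcase
      obtain ⟨v₁, hv₁, hne1⟩ := hcase
      set h : ℝ → ℝ := fun v => f₁ v * deriv (deriv f₁) v - (deriv f₁ v) ^ 2 with hhdef
      have hh : AnalyticOnNhd ℝ h IV := (hf₁.mul hd2).sub (hd1.pow 2)
      have hev : ∀ᶠ z in nhds v₁, h z = 0 := by
        filter_upwards [hIVopen.mem_nhds hv₁,
          ((he2 v₁ hv₁).continuousAt.eventually_ne hne1)] with z hz1 hz2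
        exact (mul_eq_zero.mp (hprod z hz1)).resolve_left hz2
      have hfreq : ∃ᶠ z in nhdsWithin v₁ {v₁}ᶜ, h z = 0 :=
        (hev.filter_mono nhdsWithin_le_nhds).frequently
      have hzero : Set.EqOn h 0 IV :=
        hh.eqOn_zero_of_preconnected_of_frequently_eq_zero hpre hv₁ hfreq
      set c₂ := deriv f₁ v₁ / f₁ v₁ with hc₂
      set r : ℝ → ℝ := fun v => deriv f₁ v / f₁ v with hrdef
      have hf₁ne : ∀ v ∈ IV, f₁ v ≠ 0 := fun v hv => (hf₁pos v hv).ne'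
      have hrd : ∀ v ∈ IV, DifferentiableAt ℝ r v := fun v hv =>
        ((hd1 v hv).differentiableAt).div ((hf₁ v hv).differentiableAt) (hf₁ne v hv)
      have hr0 : ∀ v ∈ IV, deriv r v = 0 := by
        intro v hv
        have h1 : HasDerivAt r ((deriv (deriv f₁) v * f₁ v - deriv f₁ v * deriv f₁ v)
            / (f₁ v) ^ 2) v :=
          (HD _ hd1 v hv).div (HD f₁ hf₁ v hv) (hf₁ne v hv)
        rw [h1.deriv]
        have hz : h v = 0 := hzero hv
        simp only [hhdef] at hz
        have : deriv (deriv f₁) v * f₁ v - deriv f₁ v * deriv f₁ v = 0 := by nlinarith [hz]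
        rw [this, zero_div]
      have hrconst : ∀ v ∈ IV, r v = c₂ := fun v hv =>
        const_of_deriv_zero_on hIVopen hconv r hrd hr0 hv hv₁
      have hd1v : ∀ v ∈ IV, deriv f₁ v = c₂ * f₁ v := by
        intro v hv
        have := hrconst v hv
        simp only [hrdef] at this
        field_simp [hf₁ne v hv] at this
        linarith
      set w : ℝ → ℝ := fun v => f₁ v * Real.exp (-(c₂ * v)) with hwdef
      have hwD : ∀ v ∈ IV, HasDerivAt w
          (deriv f₁ v * Real.exp (-(c₂ * v)) + f₁ v * (Real.exp (-(c₂ * v)) * (-c₂))) v := by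
        intro v hv
        have hexp : HasDerivAt (fun t : ℝ => Real.exp (-(c₂ * t)))
            (Real.exp (-(c₂ * v)) * (-c₂)) v := by
          have hlin : HasDerivAt (fun t : ℝ => -(c₂ * t)) (-c₂) v := by
            simpa [Pi.neg_def] using ((hasDerivAt_id v).const_mul c₂).neg
          exact (Real.hasDerivAt_exp (-(c₂ * v))).comp v hlin
        exact (HD f₁ hf₁ v hv).mul hexp
      have hw0 : ∀ v ∈ IV, deriv w v = 0 := by
        intro v hv
        rw [(hwD v hv).deriv, hd1v v hv]
        ring
      have hwd : ∀ v ∈ IV, DifferentiableAt ℝ w v := fun v hv =>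
        (hwD v hv).differentiableAt
      set c₁ := f₁ v₁ * Real.exp (-(c₂ * v₁)) with hc₁def
      have hc₁pos : 0 < c₁ := mul_pos (hf₁pos v₁ hv₁) (Real.exp_pos _)
      refine ⟨c₁, c₂, hc₁pos, fun V hV => ?_⟩
      have hwV : w V = c₁ := const_of_deriv_zero_on hIVopen hconv w hwd hw0 hV hv₁
      simp only [hwdef, Real.exp_neg] at hwV
      field_simp [Real.exp_ne_zero] at hwV
      linarith
  · -- reverse
    intro hcl x hx
    rw [scalarCurv]
    suffices hM : detM U x = 0 by rw [hM, mul_zero]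
    rw [hdetM x hx]
    rcases hcl with ⟨c₁, c₂, hc₁, hf⟩ | ⟨A, B, hf⟩
    · -- f₁ exponential case: f₁ d2 - d1² = 0
      have hd1v : ∀ v ∈ IV, deriv f₁ v = c₂ * (c₁ * Real.exp (c₂ * v)) := by
        intro v hv
        have hevq : f₁ =ᶠ[nhds v] (fun t => c₁ * Real.exp (c₂ * t)) :=
          Filter.eventuallyEq_of_mem (hIVopen.mem_nhds hv) hf
        rw [hevq.deriv_eq]
        have hD : HasDerivAt (fun t : ℝ => c₁ * Real.exp (c₂ * t))
            (c₁ * (Real.exp (c₂ * v) * c₂)) v := by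
          have hlin : HasDerivAt (fun t : ℝ => c₂ * t) c₂ v := by
            simpa using (hasDerivAt_id v).const_mul c₂
          exact ((Real.hasDerivAt_exp (c₂ * v)).comp v hlin).const_mul c₁
        rw [hD.deriv]; ring
      have hd2v : ∀ v ∈ IV, deriv (deriv f₁) v = c₂ * (c₂ * (c₁ * Real.exp (c₂ * v))) := by
        intro v hv
        have hevq : deriv f₁ =ᶠ[nhds v] (fun t => c₂ * (c₁ * Real.exp (c₂ * t))) :=
          Filter.eventuallyEq_of_mem (hIVopen.mem_nhds hv) hd1v
        rw [hevq.deriv_eq]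
        have hD : HasDerivAt (fun t : ℝ => c₂ * (c₁ * Real.exp (c₂ * t)))
            (c₂ * (c₁ * (Real.exp (c₂ * v) * c₂))) v := by
          have hlin : HasDerivAt (fun t : ℝ => c₂ * t) c₂ v := by
            simpa using (hasDerivAt_id v).const_mul c₂
          exact (((Real.hasDerivAt_exp (c₂ * v)).comp v hlin).const_mul c₁).const_mul c₂
        rw [hD.deriv]; ring
      rw [hf x.2 hx, hd1v x.2 hx, hd2v x.2 hx]
      ring
    · -- f₂ affine case: e2 = 0
      have he1v : ∀ v ∈ IV, deriv f₂ v = A := by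
        intro v hv
        have hevq : f₂ =ᶠ[nhds v] (fun t => A * t + B) :=
          Filter.eventuallyEq_of_mem (hIVopen.mem_nhds hv) hf
        rw [hevq.deriv_eq]
        have hD : HasDerivAt (fun t : ℝ => A * t + B) A v := by
          simpa using ((hasDerivAt_id v).const_mul A).add_const B
        rw [hD.deriv]
      have he2v : deriv (deriv f₂) x.2 = 0 := by
        have hevq : deriv f₂ =ᶠ[nhds x.2] (fun _ => A) :=
          Filter.eventuallyEq_of_mem (hIVopen.mem_nhds hx) he1v
        rw [hevq.deriv_eq, deriv_const]
      rw [he2v]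
      ring
end

section
/- Let c > 0 and r > 0 be real constants and let U(S,V) = c·V^{−r/c}·e^{S/c} on D = ℝ × (0,∞) (the molar internal energy of the ideal gas with heat capacity C_v = c and gas constant r). Then at every point of D: det Hess U = (r/c)·e^{2S/c}·V^{−2(c+r)/c} > 0, so the Weinhold metric Hess U is positive definite on D, and the scalar curvature of the Hessian metric of U vanishes identically on D. -/
noncomputable def F' (c a k : ℝ) : ℝ × ℝ → ℝ := fun p => k * p.2 ^ a * Real.exp (p.1 / c)

lemma hFd (c a k : ℝ) (x : ℝ × ℝ) (hx : 0 < x.2) :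
    HasFDerivAt (F' c a k)
      ((k / c * x.2 ^ a * Real.exp (x.1 / c)) • ContinuousLinearMap.fst ℝ ℝ ℝ +
       (k * a * x.2 ^ (a - 1) * Real.exp (x.1 / c)) • ContinuousLinearMap.snd ℝ ℝ ℝ) x := by
  have h2 : HasFDerivAt (fun p : ℝ × ℝ => p.2 ^ a)
      ((a * x.2 ^ (a - 1)) • ContinuousLinearMap.snd ℝ ℝ ℝ) x := by
    have := (Real.hasDerivAt_rpow_const (x := x.2) (p := a) (Or.inl hx.ne')).comp_hasFDerivAt x
      (hasFDerivAt_snd (𝕜 := ℝ) (E := ℝ) (F := ℝ) (p := x))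
    simpa [ContinuousLinearMap.smul_comp, Function.comp_def] using this
  have h1 : HasFDerivAt (fun p : ℝ × ℝ => Real.exp (p.1 / c))
      ((Real.exp (x.1 / c) / c) • ContinuousLinearMap.fst ℝ ℝ ℝ) x := by
    have hd : HasDerivAt (fun s : ℝ => Real.exp (s / c)) (Real.exp (x.1 / c) / c) x.1 := by
      simpa [div_eq_mul_inv] using ((hasDerivAt_id x.1).div_const c).exp
    have := hd.comp_hasFDerivAt x (hasFDerivAt_fst (𝕜 := ℝ) (E := ℝ) (F := ℝ) (p := x))
    simpa [ContinuousLinearMap.smul_comp, Function.comp_def] using this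
  refine ((h2.const_mul k).mul h1).congr_fderiv ?_
  ext v <;> simp [F'] <;> ring

lemma pS_F (c a k : ℝ) (x : ℝ × ℝ) (hx : 0 < x.2) :
    pS (F' c a k) x = F' c a (k / c) x := by
  simp [pS, (hFd c a k x hx).fderiv, F']

lemma pV_F (c a k : ℝ) (x : ℝ × ℝ) (hx : 0 < x.2) :
    pV (F' c a k) x = F' c (a - 1) (k * a) x := by
  simp [pV, (hFd c a k x hx).fderiv, F']

lemma pS_congr_s17 {f g : ℝ × ℝ → ℝ} (h : ∀ p : ℝ × ℝ, 0 < p.2 → f p = g p)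
    {x : ℝ × ℝ} (hx : 0 < x.2) : pS f x = pS g x := by
  have hop : IsOpen {p : ℝ × ℝ | 0 < p.2} := isOpen_lt continuous_const continuous_snd
  have hev : f =ᶠ[nhds x] g := Filter.eventuallyEq_of_mem (hop.mem_nhds hx) h
  simp [pS, hev.fderiv_eq]

lemma pV_congr_s17 {f g : ℝ × ℝ → ℝ} (h : ∀ p : ℝ × ℝ, 0 < p.2 → f p = g p)
    {x : ℝ × ℝ} (hx : 0 < x.2) : pV f x = pV g x := by
  have hop : IsOpen {p : ℝ × ℝ | 0 < p.2} := isOpen_lt continuous_const continuous_snd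
  have hev : f =ᶠ[nhds x] g := Filter.eventuallyEq_of_mem (hop.mem_nhds hx) h
  simp [pV, hev.fderiv_eq]

-- second derivatives of F'
lemma L_e11 (c a k : ℝ) : ∀ x : ℝ × ℝ, 0 < x.2 → e11 (F' c a k) x = F' c a (k / c / c) x :=
  fun x hx => by
    rw [e11, pS_congr_s17 (pS_F c a k) hx, pS_F _ _ _ _ hx]

lemma L_e12 (c a k : ℝ) : ∀ x : ℝ × ℝ, 0 < x.2 →
    e12 (F' c a k) x = F' c (a - 1) (k / c * a) x :=
  fun x hx => by
    rw [e12, pV_congr_s17 (pS_F c a k) hx, pV_F _ _ _ _ hx]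

lemma L_e22 (c a k : ℝ) : ∀ x : ℝ × ℝ, 0 < x.2 →
    e22 (F' c a k) x = F' c (a - 1 - 1) (k * a * (a - 1)) x :=
  fun x hx => by
    rw [e22, pV_congr_s17 (pV_F c a k) hx, pV_F _ _ _ _ hx]

lemma posdef_aux (A B D : ℝ) (hA : 0 < A) (hd : 0 < A * D - B ^ 2) :
    (!![A, B; B, D] : Matrix (Fin 2) (Fin 2) ℝ).PosDef := by
  refine Matrix.PosDef.of_dotProduct_mulVec_pos ?_ ?_
  · ext i j
    fin_cases i <;> fin_cases j <;> simp [Matrix.conjTranspose_apply]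
  · intro v hv
    have hq : dotProduct (star v) ((!![A, B; B, D]).mulVec v)
        = A * v 0 ^ 2 + 2 * B * v 0 * v 1 + D * v 1 ^ 2 := by
      simp [dotProduct, Matrix.mulVec, Fin.sum_univ_two]
      ring
    rw [hq]
    rcases eq_or_ne (v 1) 0 with h1 | h1
    · have h0 : v 0 ≠ 0 := fun h => hv (funext fun i => by fin_cases i <;> simp [h, h1])
      have := sq_pos_of_ne_zero h0
      rw [h1]
      nlinarith [this, hA]
    · have := sq_pos_of_ne_zero h1
      nlinarith [sq_nonneg (A * v 0 + B * v 1), mul_pos hd this, hA, mul_pos hA (mul_pos hd this)]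

set_option maxHeartbeats 1000000 in
/-- Ideal gas `U(S,V) = c·V^{−r/c}·e^{S/c}` on `ℝ × (0,∞)` (heat capacity `C_v = c > 0`, gas
constant `r > 0`): at every point, `det Hess U = (r/c)·e^{2S/c}·V^{−2(c+r)/c} > 0`, the
Weinhold metric `Hess U` is positive definite, and the scalar curvature of the Hessian metric
vanishes. -/
theorem ideal_gas_flat
    (c r : ℝ) (hc : 0 < c) (hr : 0 < r)
    (U : ℝ × ℝ → ℝ)
    (hU : ∀ x : ℝ × ℝ, U x = c * x.2 ^ (-(r / c)) * Real.exp (x.1 / c)) :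
    ∀ x : ℝ × ℝ, 0 < x.2 →
      detHess U x = (r / c) * Real.exp (2 * x.1 / c) * x.2 ^ (-(2 * (c + r) / c)) ∧
      0 < detHess U x ∧
      (!![e11 U x, e12 U x; e12 U x, e22 U x] : Matrix (Fin 2) (Fin 2) ℝ).PosDef ∧
      scalarCurv U x = 0 := by
  have hUE : U = F' c (-(r / c)) c := funext fun p => hU p
  subst hUE
  set a : ℝ := -(r / c) with ha
  have hc' : c ≠ 0 := hc.ne'
  intro x hx
  -- abbreviations
  set P : ℝ := x.2 ^ a with hP
  set E : ℝ := Real.exp (x.1 / c) with hE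
  have hPpos : 0 < P := Real.rpow_pos_of_pos hx a
  have hEpos : 0 < E := Real.exp_pos _
  have hP1 : x.2 ^ (a - 1) = P / x.2 := by
    rw [Real.rpow_sub hx, Real.rpow_one]
  have hP2 : x.2 ^ (a - 1 - 1) = P / x.2 / x.2 := by
    rw [Real.rpow_sub hx, Real.rpow_one, hP1]
  have hP3 : x.2 ^ (a - 1 - 1 - 1) = P / x.2 / x.2 / x.2 := by
    rw [Real.rpow_sub hx, Real.rpow_one, hP2]
  -- entries
  have h11 := L_e11 c a c x hx
  have h12 := L_e12 c a c x hx
  have h22 := L_e22 c a c x hx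
  have h11S : pS (e11 (F' c a c)) x = F' c a (c / c / c / c) x := by
    rw [pS_congr_s17 (L_e11 c a c) hx, pS_F _ _ _ _ hx]
  have h11V : pV (e11 (F' c a c)) x = F' c (a - 1) (c / c / c * a) x := by
    rw [pV_congr_s17 (L_e11 c a c) hx, pV_F _ _ _ _ hx]
  have h12S : pS (e12 (F' c a c)) x = F' c (a - 1) (c / c * a / c) x := by
    rw [pS_congr_s17 (L_e12 c a c) hx, pS_F _ _ _ _ hx]
  have h12V : pV (e12 (F' c a c)) x = F' c (a - 1 - 1) (c / c * a * (a - 1)) x := by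
    rw [pV_congr_s17 (L_e12 c a c) hx, pV_F _ _ _ _ hx]
  have h22S : pS (e22 (F' c a c)) x = F' c (a - 1 - 1) (c * a * (a - 1) / c) x := by
    rw [pS_congr_s17 (L_e22 c a c) hx, pS_F _ _ _ _ hx]
  have h22V : pV (e22 (F' c a c)) x = F' c (a - 1 - 1 - 1) (c * a * (a - 1) * (a - 1 - 1)) x := by
    rw [pV_congr_s17 (L_e22 c a c) hx, pV_F _ _ _ _ hx]
  have hxne : x.2 ≠ 0 := hx.ne'
  -- detHess formula
  have hdet : detHess (F' c a c) x = (r / c) * E ^ 2 * (P / x.2) ^ 2 := by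
    rw [detHess, h11, h12, h22]
    simp only [F', hP1, hP2, ← hP, ← hE]
    rw [ha]
    field_simp
    ring
  have hexp : Real.exp (2 * x.1 / c) = E ^ 2 := by
    rw [show 2 * x.1 / c = x.1 / c + x.1 / c by ring, Real.exp_add, hE]; ring
  have hrpow : x.2 ^ (-(2 * (c + r) / c)) = (P / x.2) ^ 2 := by
    have he : -(2 * (c + r) / c) = (a - 1) + (a - 1) := by
      rw [ha]; field_simp; ring
    rw [he, Real.rpow_add hx, hP1, pow_two]
  have hdet' : detHess (F' c a c) x
      = (r / c) * Real.exp (2 * x.1 / c) * x.2 ^ (-(2 * (c + r) / c)) := by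
    rw [hdet, hexp, hrpow]
  have hdetpos : 0 < detHess (F' c a c) x := by
    rw [hdet]; positivity
  refine ⟨hdet', hdetpos, ?_, ?_⟩
  · -- PosDef
    have h11pos : 0 < e11 (F' c a c) x := by
      rw [h11]; simp only [F', ← hP, ← hE]
      have hcc : c / c / c = 1 / c := by field_simp
      rw [hcc]; positivity
    have hd2 : 0 < e11 (F' c a c) x * e22 (F' c a c) x - e12 (F' c a c) x ^ 2 := by
      have h := hdetpos
      rwa [detHess] at h
    exact posdef_aux _ _ _ h11pos hd2
  · -- scalar curvature zero
    have hM : detM (F' c a c) x = 0 := by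
      rw [detM, h11, h12, h22, h11S, h11V, h12S, h12V, h22S, h22V]
      simp only [F', hP1, hP2, hP3, ← hP, ← hE, Matrix.det_fin_three]
      simp only [Matrix.of_apply, Matrix.cons_val', Matrix.cons_val_zero, Matrix.cons_val_one,
        Matrix.cons_val_two, Matrix.head_cons, Matrix.tail_cons, Matrix.empty_val',
        Matrix.cons_val_fin_one, Matrix.vecHead, Matrix.vecTail, Function.comp_apply,
        Fin.succ_zero_eq_one, Matrix.cons_val_succ]
      field_simp
      ring
    rw [scalarCurv, hM, mul_zero]
end
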